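/- arXiv:1310.2233 — 5 statements merged into one kernel-verified Lean document; each statement's English description precedes it below -/
import Mathlib

section
/- Let (A, m_A) be a complete local noetherian ring and let a ∈ m_A. Then the Krull dimension of the localization A[1/a] satisfies dim A[1/a] ≤ dim A − 1. -/
/-- If `A` is a complete local noetherian ring and `a ∈ m_A`, then
`dim A[1/a] ≤ dim A − 1`, i.e. `dim A[1/a] + 1 ≤ dim A`. -/
theorem stmt1 {A : Type*} [CommRing A] [IsNoetherianRing A] [IsLocalRing A]
    [IsAdicComplete (IsLocalRing.maximalIdeal A) A]
    (a : A) (ha : a ∈ IsLocalRing.maximalIdeal A) :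
    ringKrullDim (Localization.Away a) + 1 ≤ ringKrullDim A := by
  rcases isEmpty_or_nonempty (PrimeSpectrum (Localization.Away a)) with h | h
  · rw [ringKrullDim, Order.krullDim_eq_bot]
    exact le_trans (le_of_eq (by rfl)) bot_le
  · set f := PrimeSpectrum.comap (algebraMap A (Localization.Away a)) with hf
    have hmono : StrictMono f := by
      apply Monotone.strictMono_of_injective
      · intro p q hpq
        exact Ideal.comap_mono hpq
      · exact PrimeSpectrum.localization_comap_injective _ (Submonoid.powers a)
    have hM : (IsLocalRing.maximalIdeal A).IsPrime :=
      (IsLocalRing.maximalIdeal.isMaximal A).isPrime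
    set M : PrimeSpectrum A := ⟨IsLocalRing.maximalIdeal A, hM⟩ with hMdef
    have hlt : ∀ q : PrimeSpectrum (Localization.Away a), f q < M := by
      intro q
      have hna : a ∉ (f q).asIdeal := by
        intro hmem
        have hu : IsUnit (algebraMap A (Localization.Away a) a) :=
          IsLocalization.Away.algebraMap_isUnit a
        exact q.isPrime.ne_top (Ideal.eq_top_of_isUnit_mem _ hmem hu)
      refine lt_of_le_of_ne (IsLocalRing.le_maximalIdeal (f q).isPrime.ne_top) ?_
      intro hEq
      exact hna (hEq.symm ▸ ha)
    have key : ∀ q : PrimeSpectrum (Localization.Away a),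
        Order.height q + 1 ≤ Order.height M := by
      intro q
      have h1 : Order.height q ≤ Order.height (f q) :=
        Order.height_le_height_apply_of_strictMono f hmono q
      have h2 : Order.height (f q) + 1 ≤ Order.height M := by
        rw [Order.height_eq_iSup_lt_height M]
        exact le_iSup₂_of_le (f q) (hlt q) le_rfl
      exact le_trans (add_le_add h1 le_rfl) h2
    have h3 : (⨆ q : PrimeSpectrum (Localization.Away a), Order.height q) + 1
        ≤ Order.height M := by
      rw [ENat.iSup_add]
      exact iSup_le key
    rw [ringKrullDim, ringKrullDim, Order.krullDim_eq_iSup_height_of_nonempty]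
    refine le_trans ?_ (Order.height_le_krullDim M)
    rw [← WithBot.coe_one, ← WithBot.coe_add, WithBot.coe_le_coe]
    exact h3
end

section
/- Let A be a local noetherian Cohen–Macaulay ring and x₁ a regular element of A (contained in the maximal ideal). Then every irreducible component of Spec A contains an irreducible component of Spec A/(x₁). -/
set_option linter.unusedSectionVars false

open Submodule Pointwise IsLocalRing RingTheory.Sequence

universe u v

section AuxGeneral

variable {A : Type u} [CommRing A] {M : Type v} [AddCommGroup M] [Module A M]

lemma isAssociatedPrime_iff_ann [IsNoetherianRing A] {I : Ideal A} :
    IsAssociatedPrime I M ↔ I.IsPrime ∧ ∃ x : M, I = (span A {x}).annihilator := by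
  rw [isAssociatedPrime_iff]; simp only [bot_colon']

lemma ass_subset_union_aux [IsNoetherianRing A] (N : Submodule A M) :
    associatedPrimes A M ⊆ associatedPrimes A N ∪ associatedPrimes A (M ⧸ N) := by
  intro p hp0
  obtain ⟨hp, x, rfl⟩ := isAssociatedPrime_iff_ann.mp (AssociatedPrimes.mem_iff.mp hp0)
  by_cases h : ∃ c : A, c • x ∈ N ∧ c • x ≠ 0
  · left
    obtain ⟨c, hcN, hc0⟩ := h
    have hcp : c ∉ (span A {x}).annihilator := by
      rw [mem_annihilator_span_singleton]; exact hc0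
    refine isAssociatedPrime_iff_ann.mpr ⟨hp, ⟨c • x, hcN⟩, ?_⟩
    ext d
    rw [mem_annihilator_span_singleton, mem_annihilator_span_singleton]
    constructor
    · intro hd
      ext
      simp only [SetLike.mk_smul_mk, ZeroMemClass.coe_zero]
      rw [smul_comm, hd, smul_zero]
    · intro hd
      have : (d * c) • x = 0 := by
        have := congrArg (Subtype.val) hd
        simpa [mul_smul] using this
      have hdc : d * c ∈ (span A {x}).annihilator :=
        (mem_annihilator_span_singleton x (d * c)).mpr this
      rcases hp.mul_mem_iff_mem_or_mem.mp hdc with h' | h'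
      · rwa [← mem_annihilator_span_singleton x d]
      · exact absurd h' hcp
  · right
    push_neg at h
    refine isAssociatedPrime_iff_ann.mpr ⟨hp, Submodule.Quotient.mk x, ?_⟩
    ext d
    rw [mem_annihilator_span_singleton, mem_annihilator_span_singleton,
      ← Submodule.Quotient.mk_smul, Submodule.Quotient.mk_eq_zero]
    exact ⟨fun hd => by rw [hd]; exact N.zero_mem, fun hd => h d hd⟩

lemma ass_quot_prime [IsNoetherianRing A] {p : Ideal A} (hp : p.IsPrime) :
    associatedPrimes A (A ⧸ p) = {p} := by
  rw [associatedPrimes.eq_singleton_of_isPrimary hp.isPrimary, hp.radical]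

lemma ass_quot_finite [IsNoetherianRing A] [Module.Finite A M] (N : Submodule A M) :
    (associatedPrimes A (M ⧸ N)).Finite := by
  induction N using IsNoetherian.induction with
  | hgt N ih =>
    rcases Set.eq_empty_or_nonempty (associatedPrimes A (M ⧸ N)) with he | ⟨p, hp⟩
    · rw [he]; exact Set.finite_empty
    obtain ⟨hpp, xb, hann⟩ := isAssociatedPrime_iff_ann.mp (AssociatedPrimes.mem_iff.mp hp)
    obtain ⟨x, rfl⟩ := Submodule.Quotient.mk_surjective N xb
    have hx0 : (Submodule.Quotient.mk x : M ⧸ N) ≠ 0 := by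
      intro h
      apply hpp.ne_top
      rw [hann, h, Submodule.span_singleton_eq_bot.mpr rfl, Submodule.annihilator_bot]
    have hxN : x ∉ N := fun h => hx0 ((Submodule.Quotient.mk_eq_zero N).mpr h)
    set N' : Submodule A M := N ⊔ span A {x} with hN'
    have hle : N ≤ N' := le_sup_left
    have hlt : N < N' := by
      refine lt_of_le_of_ne hle (fun h => hxN ?_)
      rw [h]
      exact (le_sup_right : span A {x} ≤ N') (mem_span_singleton_self x)
    have hmapN : map N.mkQ N = ⊥ := by
      rw [eq_bot_iff]
      rintro y ⟨m, hm, rfl⟩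
      simpa [Submodule.Quotient.mk_eq_zero] using hm
    have hmap : map N.mkQ N' = span A {(Submodule.Quotient.mk x : M ⧸ N)} := by
      rw [hN', Submodule.map_sup, hmapN, bot_sup_eq, Submodule.map_span,
        Set.image_singleton]
      rfl
    -- K := map N.mkQ N'
    have hsub := ass_subset_union_aux (map N.mkQ N' : Submodule A (M ⧸ N))
    -- Ass of the submodule: it equals {p}
    have hK : associatedPrimes A (map N.mkQ N' : Submodule A (M ⧸ N)) ⊆ {p} := by
      set f := LinearMap.toSpanSingleton A (M ⧸ N) (Submodule.Quotient.mk x) with hf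
      have hker : LinearMap.ker f = p := by
        ext c
        rw [LinearMap.mem_ker, hann, mem_annihilator_span_singleton]
        rfl
      have hrange : LinearMap.range f = map N.mkQ N' := by
        rw [hmap, LinearMap.span_singleton_eq_range]
      rw [← hrange]
      have e := f.quotKerEquivRange
      rw [← LinearEquiv.AssociatedPrimes.eq e, hker, ass_quot_prime hpp]
    -- Ass of the quotient
    have hQ : associatedPrimes A ((M ⧸ N) ⧸ (map N.mkQ N' : Submodule A (M ⧸ N)))
        = associatedPrimes A (M ⧸ N') :=
      LinearEquiv.AssociatedPrimes.eq (Submodule.quotientQuotientEquivQuotient N N' hle)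
    refine Set.Finite.subset (Set.Finite.union (Set.finite_singleton p) (ih N' hlt)) ?_
    refine subset_trans hsub ?_
    rw [hQ]
    exact Set.union_subset_union_left _ hK

lemma ass_finite (A : Type*) [CommRing A] (M : Type*) [AddCommGroup M] [Module A M]
    [IsNoetherianRing A] [Module.Finite A M] : (associatedPrimes A M).Finite := by
  have h := ass_quot_finite (A := A) (M := M) ⊥
  rwa [LinearEquiv.AssociatedPrimes.eq (Submodule.quotEquivOfEqBot ⊥ rfl)] at h

lemma zd_of_mem_minimal {p : Ideal A} (hp : p ∈ minimalPrimes A) {c : A} (hc : c ∈ p) :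
    ∃ t : A, t ≠ 0 ∧ c * t = 0 := by
  haveI hpp : p.IsPrime := hp.1.1
  have h1 : IsNilpotent (algebraMap A (Localization p.primeCompl) c) :=
    by haveI : Ring.KrullDimLE 0 (Localization.AtPrime p) := .of_isLocalization _ hp _
       exact (Ring.KrullDimLE.isNilpotent_iff_mem_maximalIdeal (R := Localization.AtPrime p)).mpr
        ((IsLocalization.AtPrime.to_map_mem_maximal_iff (Localization p.primeCompl) p c).mpr hc)
  obtain ⟨k, hk⟩ := h1
  rw [← map_pow] at hk
  obtain ⟨s, hs⟩ := (IsLocalization.map_eq_zero_iff p.primeCompl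
    (Localization p.primeCompl) _).mp hk
  have hsp : (s : A) ∉ p := s.2
  clear hk
  induction k generalizing s with
  | zero =>
    exfalso
    apply hsp
    rw [pow_zero, mul_one] at hs
    rw [hs]
    exact p.zero_mem
  | succ k ihk =>
    by_cases h : (s : A) * c ^ k = 0
    · exact ihk s h hsp
    · exact ⟨(s : A) * c ^ k, h, by rw [← hs, pow_succ]; ring⟩

lemma not_mem_minimal_of_regular {x₁ : A} (hreg : IsSMulRegular A x₁)
    {p : Ideal A} (hp : p ∈ minimalPrimes A) : x₁ ∉ p := by
  intro hx
  obtain ⟨t, ht0, htx⟩ := zd_of_mem_minimal hp hx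
  exact ht0 (hreg (show x₁ • t = x₁ • 0 by rw [smul_eq_mul, htx, smul_zero]))

lemma exists_ass_ge_of_minimal [IsNoetherianRing A] {p : Ideal A}
    (hp : p ∈ minimalPrimes A) : ∃ P ∈ associatedPrimes A A, p ≤ P := by
  have hsub : (p : Set A) ⊆ ⋃ P ∈ associatedPrimes A A, (P : Set A) := by
    rw [biUnion_associatedPrimes_eq_zero_divisors]
    intro c hc
    obtain ⟨t, ht, hct⟩ := zd_of_mem_minimal hp hc
    exact ⟨t, ht, by rw [smul_eq_mul]; exact hct⟩
  have hfin := ass_finite A A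
  have hsub2 : (p : Set A) ⊆ ⋃ i ∈ (hfin.toFinset : Finset (Ideal A)), ((id i : Ideal A) : Set A) := by
    refine hsub.trans ?_
    intro c hc
    simp only [Set.mem_iUnion, SetLike.mem_coe, id_eq, exists_prop] at hc ⊢
    obtain ⟨P, hP, hcP⟩ := hc
    exact ⟨P, by rw [Set.Finite.mem_toFinset]; exact hP, hcP⟩
  have := (Ideal.subset_union_prime (⊥ : Ideal A) ⊥ (fun i hi _ _ => by
    rw [Set.Finite.mem_toFinset] at hi
    exact hi.isPrime)).mp hsub2
  obtain ⟨P, hPmem, hpP⟩ := this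
  rw [Set.Finite.mem_toFinset] at hPmem
  exact ⟨P, hPmem, hpP⟩

end AuxGeneral

section AuxLocal

variable {A : Type u} [CommRing A] [IsLocalRing A] [IsNoetherianRing A]

variable {M : Type v} [AddCommGroup M] [Module A M]

lemma span_le_jacobson_bot {y : A} (hy : y ∈ maximalIdeal A) :
    Ideal.span {y} ≤ Ideal.jacobson ⊥ := by
  rw [IsLocalRing.jacobson_eq_maximalIdeal ⊥ bot_ne_top]
  exact (Ideal.span_le).mpr (by simpa using hy)

lemma nontrivial_quotSMulTop [Module.Finite A M] [Nontrivial M]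
    {y : A} (hy : y ∈ maximalIdeal A) : Nontrivial (QuotSMulTop y M) := by
  rcases subsingleton_or_nontrivial (QuotSMulTop y M) with h | h
  · exfalso
    have htop : (y • ⊤ : Submodule A M) = ⊤ :=
      Submodule.Quotient.subsingleton_iff.mp h
    have hbot : (⊤ : Submodule A M) = ⊥ :=
      eq_bot_of_le_smul_of_le_jacobson_bot (Ideal.span {y}) ⊤
        (IsNoetherian.noetherian _)
        (by rw [ideal_span_singleton_smul, htop])
        (span_le_jacobson_bot hy)
    obtain ⟨a, b, hab⟩ := exists_pair_ne M
    apply hab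
    have ha : a ∈ (⊥ : Submodule A M) := hbot ▸ mem_top
    have hb : b ∈ (⊥ : Submodule A M) := hbot ▸ mem_top
    rw [mem_bot] at ha hb
    rw [ha, hb]
  · exact h

lemma isSMulRegular_of_notMem_ass {N : Type*} [AddCommGroup N] [Module A N]
    {z : A} (h : ∀ P ∈ associatedPrimes A N, z ∉ P) : IsSMulRegular N z := by
  have hz : z ∉ {r : A | ∃ x : N, x ≠ 0 ∧ r • x = 0} := by
    rw [← biUnion_associatedPrimes_eq_zero_divisors]
    simp only [Set.mem_iUnion]
    rintro ⟨P, hP, hzP⟩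
    exact h P hP hzP
  intro a b hab
  have hab' : z • a = z • b := hab
  by_contra hne
  exact hz ⟨a - b, sub_ne_zero.mpr hne, by rw [smul_sub, hab', sub_self]⟩

lemma step_lemma [Module.Finite A M]
    {x : A} (hx : x ∈ maximalIdeal A) (hreg : IsSMulRegular M x)
    {p : Ideal A} (hp : p ∈ associatedPrimes A M) :
    ∃ q ∈ associatedPrimes A (QuotSMulTop x M), p ⊔ Ideal.span {x} ≤ q ∧ p ≠ q := by
  obtain ⟨hp', a, ha⟩ := isAssociatedPrime_iff_ann.mp (AssociatedPrimes.mem_iff.mp hp)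
  have ha0 : a ≠ 0 := by
    rintro rfl
    exact hp'.ne_top (by rw [ha, Submodule.span_singleton_eq_bot.mpr rfl,
      Submodule.annihilator_bot])
  have hpa : ∀ c ∈ p, c • a = 0 := fun c hc =>
    (mem_annihilator_span_singleton a c).mp (ha ▸ hc)
  have hxp : x ∉ p := by
    intro hxp
    exact ha0 (hreg (show x • a = x • 0 by rw [hpa x hxp, smul_zero]))
  set T : Submodule A M := Submodule.torsionBySet A M (p : Set A) with hT
  have haT : a ∈ T := (Submodule.mem_torsionBySet_iff _ _).mpr (fun c => hpa c c.2)
  have hTne : ¬ T ≤ x • (⊤ : Submodule A M) := by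
    intro hle
    have h1 : T ≤ Ideal.span {x} • T := by
      intro t ht
      obtain ⟨m, -, rfl⟩ := Set.mem_smul_set.mp (hle ht)
      have hmT : m ∈ T := by
        refine (Submodule.mem_torsionBySet_iff _ _).mpr (fun c => ?_)
        have : (c : A) • (x • m) = 0 :=
          (Submodule.mem_torsionBySet_iff _ _).mp ht c
        apply hreg
        show x • (c : A) • m = x • 0
        rw [smul_zero, smul_comm]
        exact this
      rw [ideal_span_singleton_smul]
      exact Submodule.smul_mem_pointwise_smul m x T hmT
    have := eq_bot_of_le_smul_of_le_jacobson_bot (Ideal.span {x}) T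
      (IsNoetherian.noetherian _) h1 (span_le_jacobson_bot hx)
    rw [this] at haT
    exact ha0 (mem_bot A |>.mp haT)
  obtain ⟨b, hbT, hbx⟩ := SetLike.not_le_iff_exists.mp hTne
  have hb0 : (Submodule.Quotient.mk b : QuotSMulTop x M) ≠ 0 := by
    rwa [ne_eq, Submodule.Quotient.mk_eq_zero]
  obtain ⟨q, hq, hle⟩ := exists_le_isAssociatedPrime_of_isNoetherianRing A _ hb0
  rw [bot_colon'] at hle
  refine ⟨q, hq, sup_le ?_ ?_, fun hpq => hxp ?_⟩
  · intro c hc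
    apply hle
    rw [mem_annihilator_span_singleton, ← Submodule.Quotient.mk_smul,
      Submodule.Quotient.mk_eq_zero]
    have : c • b = 0 := (Submodule.mem_torsionBySet_iff _ _).mp hbT ⟨c, hc⟩
    rw [this]
    exact Submodule.zero_mem _
  · rw [Ideal.span_le]
    intro z hz
    rw [Set.mem_singleton_iff] at hz
    subst hz
    apply hle
    rw [mem_annihilator_span_singleton, ← Submodule.Quotient.mk_smul,
      Submodule.Quotient.mk_eq_zero]
    exact Submodule.smul_mem_pointwise_smul b z ⊤ mem_top
  · rw [hpq]
    apply hle
    rw [mem_annihilator_span_singleton, ← Submodule.Quotient.mk_smul,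
      Submodule.Quotient.mk_eq_zero]
    exact Submodule.smul_mem_pointwise_smul b x ⊤ mem_top

lemma max_not_ass_quot' {M : Type v} [AddCommGroup M] [Module A M]
    {x₁ x₂ y : A} (hx₁m : x₁ ∈ maximalIdeal A) (hx₂m : x₂ ∈ maximalIdeal A)
    (hx₁reg : IsSMulRegular M x₁) (hx₂reg : IsSMulRegular (QuotSMulTop x₁ M) x₂)
    (hyreg : IsSMulRegular M y) :
    maximalIdeal A ∉ associatedPrimes A (QuotSMulTop y M) := by
  intro hm0
  obtain ⟨-, ub, hann⟩ := isAssociatedPrime_iff_ann.mp (AssociatedPrimes.mem_iff.mp hm0)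
  obtain ⟨u, rfl⟩ := Submodule.Quotient.mk_surjective _ ub
  have hu0 : (Submodule.Quotient.mk u : QuotSMulTop y M) ≠ 0 := by
    intro h
    exact (maximalIdeal.isMaximal A).ne_top (by
      rw [hann, h, Submodule.span_singleton_eq_bot.mpr rfl, Submodule.annihilator_bot])
  have hkill : ∀ c ∈ maximalIdeal A, c • u ∈ y • (⊤ : Submodule A M) := by
    intro c hc
    have : c • (Submodule.Quotient.mk u : QuotSMulTop y M) = 0 :=
      (mem_annihilator_span_singleton _ c).mp (hann ▸ hc)
    rwa [← Submodule.Quotient.mk_smul, Submodule.Quotient.mk_eq_zero] at this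
  obtain ⟨v, -, hv⟩ := Set.mem_smul_set.mp (hkill x₁ hx₁m)
  -- hv : y • v = x₁ • u
  have hv0 : (Submodule.Quotient.mk v : QuotSMulTop x₁ M) ≠ 0 := by
    rw [ne_eq, Submodule.Quotient.mk_eq_zero]
    intro hvmem
    obtain ⟨w, -, hw⟩ := Set.mem_smul_set.mp hvmem
    -- hw : x₁ • w = v
    have h1 : x₁ • u = x₁ • (y • w) := by
      rw [← hv, ← hw, smul_comm]
    have h2 : u = y • w := hx₁reg h1
    apply hu0
    rw [Submodule.Quotient.mk_eq_zero, h2]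
    exact Submodule.smul_mem_pointwise_smul w y ⊤ mem_top
  have hvkill : x₂ • (Submodule.Quotient.mk v : QuotSMulTop x₁ M) = 0 := by
    obtain ⟨uc, -, huc⟩ := Set.mem_smul_set.mp (hkill x₂ hx₂m)
    -- huc : y • uc = x₂ • u
    have hcv : x₂ • v = x₁ • uc := by
      apply hyreg
      show y • (x₂ • v) = y • (x₁ • uc)
      rw [smul_comm y x₂, hv, smul_comm x₂ x₁, ← huc, smul_comm x₁ y]
    rw [← Submodule.Quotient.mk_smul, Submodule.Quotient.mk_eq_zero, hcv]
    exact Submodule.smul_mem_pointwise_smul uc x₁ ⊤ mem_top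
  exact hv0 (hx₂reg (show x₂ • _ = x₂ • 0 by rw [hvkill, smul_zero]))

lemma max_not_ass_simple {M : Type v} [AddCommGroup M] [Module A M]
    {x z : A} (hz : z ∈ maximalIdeal A) (hreg : IsSMulRegular (QuotSMulTop x M) z) :
    maximalIdeal A ∉ associatedPrimes A (QuotSMulTop x M) := by
  intro hm0
  obtain ⟨-, v, hann⟩ := isAssociatedPrime_iff_ann.mp (AssociatedPrimes.mem_iff.mp hm0)
  have hv0 : v ≠ 0 := by
    rintro rfl
    exact (maximalIdeal.isMaximal A).ne_top (by
      rw [hann, Submodule.span_singleton_eq_bot.mpr rfl, Submodule.annihilator_bot])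
  have : z • v = 0 := (mem_annihilator_span_singleton v z).mp (hann ▸ hz)
  exact hv0 (hreg (show z • v = z • 0 by rw [this, smul_zero]))

lemma exists_avoid (N₁ : Type v) (N₂ : Type v) [AddCommGroup N₁] [Module A N₁]
    [Module.Finite A N₁] [AddCommGroup N₂] [Module A N₂] [Module.Finite A N₂]
    (h₁ : maximalIdeal A ∉ associatedPrimes A N₁)
    (h₂ : maximalIdeal A ∉ associatedPrimes A N₂) :
    ∃ z ∈ maximalIdeal A, (∀ P ∈ associatedPrimes A N₁, z ∉ P) ∧
      (∀ P ∈ associatedPrimes A N₂, z ∉ P) := by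
  have hfin : (associatedPrimes A N₁ ∪ associatedPrimes A N₂).Finite :=
    (ass_finite A N₁).union (ass_finite A N₂)
  by_contra hcon
  push_neg at hcon
  have hsub : ((maximalIdeal A : Ideal A) : Set A) ⊆
      ⋃ i ∈ (hfin.toFinset : Finset (Ideal A)), ((id i : Ideal A) : Set A) := by
    intro z hz
    simp only [Set.mem_iUnion, SetLike.mem_coe, id_eq, exists_prop]
    by_cases h : ∃ P ∈ associatedPrimes A N₁, z ∈ P
    · obtain ⟨P, hP, hzP⟩ := h
      exact ⟨P, by rw [Set.Finite.mem_toFinset]; exact Or.inl hP, hzP⟩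
    · push_neg at h
      obtain ⟨P, hP, hzP⟩ := hcon z hz h
      exact ⟨P, by rw [Set.Finite.mem_toFinset]; exact Or.inr hP, hzP⟩
  have := (Ideal.subset_union_prime (⊥ : Ideal A) ⊥ (fun i hi _ _ => by
    rw [Set.Finite.mem_toFinset] at hi
    exact (hi.elim (fun h => h.isPrime) (fun h => h.isPrime)))).mp hsub
  obtain ⟨P, hPmem, hmP⟩ := this
  rw [Set.Finite.mem_toFinset] at hPmem
  have hPprime : P.IsPrime := hPmem.elim (fun h => h.isPrime) (fun h => h.isPrime)
  have hPm : (P : Ideal A) = maximalIdeal A :=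
    le_antisymm (le_maximalIdeal hPprime.ne_top) hmP
  rcases hPmem with h | h
  · exact h₁ (hPm ▸ h)
  · exact h₂ (hPm ▸ h)

lemma exchange_aux : ∀ (n : ℕ), ∀ (M : Type v) [AddCommGroup M] [Module A M],
    ∀ [Module.Finite A M], ∀ (rs : List A), rs.length = n → rs ≠ [] →
    (∀ r ∈ rs, r ∈ maximalIdeal A) → IsRegular M rs →
    ∀ y ∈ maximalIdeal A, IsSMulRegular M y →
    ∃ rs' : List A, (∀ r ∈ rs', r ∈ maximalIdeal A) ∧ rs'.length = rs.length - 1 ∧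
      IsRegular M (y :: rs') := by
  intro n
  induction n using Nat.strong_induction_on with
  | _ n ih =>
    intro M _ _ _ rs hlen hne hmem hreg y hy hyreg
    haveI hM : Nontrivial M := hreg.nontrivial
    match rs, hne, hlen with
    | [x], _, hlen =>
      refine ⟨[], by simp, by simp, ?_⟩
      rw [isRegular_cons_iff]
      haveI := nontrivial_quotSMulTop (A := A) (M := M) hy
      exact ⟨hyreg, IsRegular.nil A _⟩
    | x₁ :: x₂ :: rest, _, hlen =>
      have hx₁m := hmem x₁ (by simp)
      have hx₂m := hmem x₂ (by simp)
      rw [isRegular_cons_iff] at hreg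
      obtain ⟨hx₁reg, htail⟩ := hreg
      have hx₂reg : IsSMulRegular (QuotSMulTop x₁ M) x₂ :=
        ((isRegular_cons_iff _ _ _).mp htail).1
      haveI hQy : Nontrivial (QuotSMulTop y M) := nontrivial_quotSMulTop (M := M) hy
      haveI hQx : Nontrivial (QuotSMulTop x₁ M) := nontrivial_quotSMulTop (M := M) hx₁m
      have hmy : maximalIdeal A ∉ associatedPrimes A (QuotSMulTop y M) :=
        max_not_ass_quot' hx₁m hx₂m hx₁reg hx₂reg hyreg
      have hmx : maximalIdeal A ∉ associatedPrimes A (QuotSMulTop x₁ M) :=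
        max_not_ass_simple hx₂m hx₂reg
      obtain ⟨z, hzm, hz₁, hz₂⟩ := exists_avoid (QuotSMulTop y M) (QuotSMulTop x₁ M) hmy hmx
      have hzy : IsSMulRegular (QuotSMulTop y M) z := isSMulRegular_of_notMem_ass hz₁
      have hzx : IsSMulRegular (QuotSMulTop x₁ M) z := isSMulRegular_of_notMem_ass hz₂
      -- [y, z] is regular on M, hence [z, y] is, giving y regular on M/zM and z regular on M
      have hyz : IsRegular M [y, z] := by
        rw [isRegular_cons_iff]
        refine ⟨hyreg, ?_⟩
        rw [isRegular_cons_iff]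
        haveI := nontrivial_quotSMulTop (A := A) (M := QuotSMulTop y M) hzm
        exact ⟨hzy, IsRegular.nil A _⟩
      have hzyM : IsRegular M [z, y] :=
        IsLocalRing.isRegular_of_perm hyz (List.Perm.swap z y [])
      have hzregM : IsSMulRegular M z := ((isRegular_cons_iff _ _ _).mp hzyM).1
      have hyQz : IsSMulRegular (QuotSMulTop z M) y :=
        ((isRegular_cons_iff _ _ _).mp (((isRegular_cons_iff _ _ _).mp hzyM).2)).1
      -- first IH application: QuotSMulTop x₁ M with sequence x₂ :: rest and element z
      have hlen2 : (x₂ :: rest).length = n - 1 := by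
        simp only [List.length_cons] at hlen ⊢; omega
      have hn1 : n - 1 < n := by
        simp only [List.length_cons] at hlen; omega
      obtain ⟨ws, hwsm, hwslen, hws⟩ := ih (n-1) hn1 (QuotSMulTop x₁ M) (x₂ :: rest)
        hlen2 (by simp) (fun r hr => hmem r (List.mem_cons_of_mem x₁ hr)) htail z hzm hzx
      -- hws : IsRegular (QuotSMulTop x₁ M) (z :: ws)
      have h2 : IsRegular M (x₁ :: z :: ws) := by
        rw [isRegular_cons_iff]; exact ⟨hx₁reg, hws⟩
      have h3 : IsRegular M (z :: x₁ :: ws) :=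
        IsLocalRing.isRegular_of_perm h2 (List.Perm.swap z x₁ ws)
      have h4 : IsRegular (QuotSMulTop z M) (x₁ :: ws) :=
        ((isRegular_cons_iff _ _ _).mp h3).2
      -- second IH application: QuotSMulTop z M with sequence x₁ :: ws and element y
      have hlen3 : (x₁ :: ws).length = n - 1 := by
        simp only [List.length_cons, hwslen, List.length_cons] at hlen2 ⊢
        simp only [List.length_cons] at hlen
        omega
      obtain ⟨ts, htsm, htslen, hts⟩ := ih (n-1) hn1 (QuotSMulTop z M) (x₁ :: ws)
        hlen3 (by simp)
        (by
          intro r hr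
          rcases List.mem_cons.mp hr with rfl | hr
          · exact hx₁m
          · exact hwsm r hr)
        h4 y hy hyQz
      -- hts : IsRegular (QuotSMulTop z M) (y :: ts)
      have h5 : IsRegular M (z :: y :: ts) := by
        rw [isRegular_cons_iff]; exact ⟨hzregM, hts⟩
      have h6 : IsRegular M (y :: z :: ts) :=
        IsLocalRing.isRegular_of_perm h5 (List.Perm.swap y z ts)
      refine ⟨z :: ts, ?_, ?_, h6⟩
      · intro r hr
        rcases List.mem_cons.mp hr with rfl | hr
        · exact hzm
        · exact htsm r hr
      · simp only [List.length_cons, htslen, hlen3] at *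
        omega

lemma ischebeck_chain (rs : List A) :
    ∀ (M : Type v) [AddCommGroup M] [Module A M] [Module.Finite A M],
      (∀ r ∈ rs, r ∈ maximalIdeal A) → IsRegular M rs →
      ∀ p ∈ associatedPrimes A M,
      ∃ c : LTSeries (PrimeSpectrum A), c.head.asIdeal = p ∧ c.length = rs.length := by
  induction rs with
  | nil =>
    intro M _ _ _ _ _ p hp
    exact ⟨RelSeries.singleton _ ⟨p, hp.isPrime⟩, rfl, rfl⟩
  | cons x tail ih =>
    intro M _ _ _ hmem hreg p hp
    rw [isRegular_cons_iff] at hreg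
    obtain ⟨q, hq, hle, hne⟩ := step_lemma (hmem x (List.mem_cons_self)) hreg.1 hp
    obtain ⟨c, hchead, hclen⟩ := ih (QuotSMulTop x M)
      (fun r hr => hmem r (List.mem_cons_of_mem x hr)) hreg.2 q hq
    have hlt : (⟨p, hp.isPrime⟩ : PrimeSpectrum A) < c.head := by
      have : p < c.head.asIdeal := by
        rw [hchead]
        exact lt_of_le_of_ne (le_trans le_sup_left hle) hne
      exact this
    refine ⟨c.cons ⟨p, hp.isPrime⟩ hlt, ?_, by simp [hclen]⟩
    rw [RelSeries.head_cons]

end AuxLocal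

/-- A local noetherian ring is Cohen–Macaulay if its maximal ideal contains a
regular sequence whose length equals the Krull dimension of the ring. -/
def IsCohenMacaulayLocalRing (A : Type*) [CommRing A] [IsLocalRing A] : Prop :=
  ∃ rs : List A, (∀ x ∈ rs, x ∈ IsLocalRing.maximalIdeal A) ∧
    RingTheory.Sequence.IsRegular A rs ∧ ringKrullDim A = rs.length

/-- If `A` is a local noetherian Cohen–Macaulay ring and `x₁` is a regular element
in the maximal ideal, then every minimal prime of `A` is contained in a minimal
prime over `(x₁)`; i.e. every irreducible component of `Spec A` contains an
irreducible component of `Spec A/(x₁)`. -/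

theorem stmt3 {A : Type*} [CommRing A] [IsNoetherianRing A] [IsLocalRing A]
    (hCM : IsCohenMacaulayLocalRing A)
    (x₁ : A) (hx₁ : x₁ ∈ IsLocalRing.maximalIdeal A) (hreg : IsSMulRegular A x₁) :
    ∀ p ∈ minimalPrimes A, ∃ q ∈ (Ideal.span {x₁}).minimalPrimes, p ≤ q := by
  intro p hp
  obtain ⟨rs, hrsm, hrs, hdim⟩ := hCM
  -- rs is nonempty
  have hrsne : rs ≠ [] := by
    rintro rfl
    simp only [List.length_nil, Nat.cast_zero] at hdim
    -- build a chain of length 1 : p < maximalIdeal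
    have hxp : x₁ ∉ p := not_mem_minimal_of_regular hreg hp
    haveI hpp : p.IsPrime := hp.1.1
    have hlt : (⟨p, hpp⟩ : PrimeSpectrum A) <
        ⟨maximalIdeal A, (maximalIdeal.isMaximal A).isPrime⟩ := by
      have : p < maximalIdeal A :=
        lt_of_le_of_ne (le_maximalIdeal hpp.ne_top) (fun h => hxp (h ▸ hx₁))
      exact this
    have hchain := Order.LTSeries.length_le_krullDim
      ((RelSeries.singleton _ (⟨maximalIdeal A, (maximalIdeal.isMaximal A).isPrime⟩ :
        PrimeSpectrum A)).cons ⟨p, hpp⟩ hlt)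
    rw [show Order.krullDim (PrimeSpectrum A) = ringKrullDim A from rfl, hdim] at hchain
    norm_num [RelSeries.cons_length] at hchain
    exact Nat.succ_ne_zero _ hchain
  -- exchange: regular sequence of length n-1 on A/(x₁)
  obtain ⟨rs', hrs'm, hrs'len, hrs'reg⟩ := exchange_aux rs.length A rs rfl hrsne hrsm hrs
    x₁ hx₁ hreg
  have hrs'q : IsRegular (QuotSMulTop x₁ A) rs' :=
    ((isRegular_cons_iff _ _ _).mp hrs'reg).2
  -- find an associated prime P ⊇ p
  obtain ⟨P, hP, hpP⟩ := exists_ass_ge_of_minimal hp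
  -- find q ∈ Ass(A/(x₁)) with P ⊔ (x₁) ≤ q
  obtain ⟨q, hq, hPq, -⟩ := step_lemma hx₁ hreg hP
  -- chain above q of length n-1
  obtain ⟨c, hchead, hclen⟩ := ischebeck_chain rs' (QuotSMulTop x₁ A) hrs'm hrs'q q hq
  -- q is a minimal prime of (x₁)
  have hx₁q : Ideal.span {x₁} ≤ q := le_trans le_sup_right hPq
  refine ⟨q, ⟨⟨hq.isPrime, hx₁q⟩, ?_⟩, le_trans (le_trans hpP le_sup_left) hPq⟩
  · -- minimality
    rintro J ⟨hJprime, hJx⟩ hJq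
    by_contra hqJ
    have hJltq : J < q := lt_of_le_of_ne hJq (fun h => hqJ (le_of_eq h.symm))
    obtain ⟨p₀, hp₀, hp₀J⟩ := Ideal.exists_minimalPrimes_le (I := ⊥) (J := J) bot_le
    have hp₀min : p₀ ∈ minimalPrimes A := hp₀
    have hx₁p₀ : x₁ ∉ p₀ := not_mem_minimal_of_regular hreg hp₀min
    haveI hp₀p : p₀.IsPrime := hp₀min.1.1
    have hp₀lt : p₀ < J := lt_of_le_of_ne hp₀J
      (fun h => hx₁p₀ (h ▸ hJx (Ideal.subset_span rfl)))
    -- build the long chain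
    have hJlt' : (⟨J, hJprime⟩ : PrimeSpectrum A) < c.head := by
      have : J < c.head.asIdeal := hchead ▸ hJltq
      exact this
    set c1 := c.cons ⟨J, hJprime⟩ hJlt' with hc1
    have hp₀lt' : (⟨p₀, hp₀p⟩ : PrimeSpectrum A) < c1.head := by
      rw [hc1, RelSeries.head_cons]
      exact hp₀lt
    have hchain := Order.LTSeries.length_le_krullDim (c1.cons ⟨p₀, hp₀p⟩ hp₀lt')
    rw [show Order.krullDim (PrimeSpectrum A) = ringKrullDim A from rfl, hdim] at hchain
    have hrspos : 0 < rs.length := List.length_pos_iff.mpr hrsne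
    have hlen : (c1.cons ⟨p₀, hp₀p⟩ hp₀lt').length = rs.length + 1 := by
      simp only [RelSeries.cons_length, hc1, hclen, hrs'len]
      omega
    rw [hlen] at hchain
    have hfin : (rs.length : ℕ) + 1 ≤ (rs.length : ℕ) := by exact_mod_cast hchain
    omega
end

section
/- Let A be a local noetherian Cohen–Macaulay ring and x₁,…,x_k a regular sequence in A with k ≥ 2. Then each irreducible component of Spec A[1/x_k] meets the closed subset Spec (A/(x₁,…,x_{k−1}))[1/x_k]. -/
open Submodule Pointwise

section Aux

variable {A : Type*} [CommRing A] [IsNoetherianRing A]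

/-- Every minimal prime of a noetherian ring lies below some associated prime. -/
lemma exists_isAssociatedPrime_ge_of_mem_minimalPrimes
    {p : Ideal A} (hp : p ∈ minimalPrimes A) :
    ∃ q : Ideal A, IsAssociatedPrime q A ∧ p ≤ q := by
  classical
  haveI hprime : p.IsPrime := hp.1.1
  -- every element of a minimal prime is "nilpotent up to a unit outside p"
  have hA : ∀ x ∈ p, ∃ s, s ∉ p ∧ ∃ n : ℕ, s * x ^ n = 0 := by
    intro x hx
    have h1 : algebraMap A (Localization p.primeCompl) x ∈
        IsLocalRing.maximalIdeal (Localization p.primeCompl) :=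
      (IsLocalization.AtPrime.to_map_mem_maximal_iff _ p x).mpr hx
    obtain ⟨n, hn⟩ :=
      (by haveI := Ring.KrullDimLE.of_isLocalization p hp (Localization p.primeCompl); exact Ring.KrullDimLE.isNilpotent_iff_mem_maximalIdeal.mpr h1)
    rw [← map_pow] at hn
    obtain ⟨m, hm⟩ :=
      (IsLocalization.map_eq_zero_iff p.primeCompl (Localization p.primeCompl) (x ^ n)).mp hn
    exact ⟨m, m.2, n, hm⟩
  choose! s hs n hn using hA
  obtain ⟨T, hT⟩ : p.FG := IsNoetherian.noetherian p
  set S₀ : A := ∏ x ∈ T, s x with hS₀def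
  have hTp : ∀ x ∈ T, x ∈ p := fun x hx => hT ▸ Ideal.subset_span (Finset.mem_coe.mpr hx)
  have hS₀ : S₀ ∉ p := by
    have : S₀ ∈ p.primeCompl := Submonoid.prod_mem _ fun x hx => hs x (hTp x hx)
    exact this
  set J : Ideal A := (Submodule.span A {S₀}).annihilator with hJdef
  have hrad : p ≤ J.radical := by
    rw [← hT]
    refine Ideal.span_le.mpr fun x hx => ?_
    have hxT : x ∈ T := Finset.mem_coe.mp hx
    have hpow : x ^ n x ∈ J := by
      rw [hJdef, Submodule.mem_annihilator_span_singleton, smul_eq_mul]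
      have hfac : S₀ = s x * ∏ y ∈ T.erase x, s y := by
        rw [hS₀def]; exact (Finset.mul_prod_erase T s hxT).symm
      calc x ^ n x * S₀ = (s x * x ^ n x) * ∏ y ∈ T.erase x, s y := by
            rw [hfac]; ring
        _ = 0 := by rw [hn x (hTp x hxT), zero_mul]
    exact Ideal.mem_radical_of_pow_mem (Ideal.le_radical hpow)
  have hex : ∃ k : ℕ, p ^ k ≤ J :=
    Ideal.exists_pow_le_of_le_radical_of_fg hrad ⟨T, hT⟩
  set k₀ := Nat.find hex with hk₀def
  have hk₀ : p ^ k₀ ≤ J := Nat.find_spec hex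
  have hS₀ne : S₀ ≠ 0 := fun h => hS₀ (h ▸ p.zero_mem)
  have hk₀0 : k₀ ≠ 0 := by
    intro h
    have h1 : (1 : A) ∈ p ^ k₀ := by rw [h, pow_zero, Ideal.one_eq_top]; trivial
    have := hk₀ h1
    rw [hJdef, Submodule.mem_annihilator_span_singleton, smul_eq_mul, one_mul] at this
    exact hS₀ne this
  have hmin : ¬ p ^ (k₀ - 1) ≤ J := Nat.find_min hex (by omega)
  obtain ⟨c, hc, hcJ⟩ := SetLike.not_le_iff_exists.mp hmin
  have ha : c * S₀ ≠ 0 := by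
    intro h
    apply hcJ
    rw [hJdef, Submodule.mem_annihilator_span_singleton, smul_eq_mul]
    exact h
  have hpa : p ≤ (Submodule.span A {c * S₀}).annihilator := by
    intro t ht
    have hk1 : k₀ - 1 + 1 = k₀ := Nat.succ_pred_eq_of_pos (Nat.pos_of_ne_zero hk₀0)
    have htc : t * c ∈ p ^ k₀ := by
      rw [← hk1, pow_succ']
      exact Ideal.mul_mem_mul ht hc
    have h2 := hk₀ htc
    rw [hJdef, Submodule.mem_annihilator_span_singleton, smul_eq_mul] at h2
    rw [Submodule.mem_annihilator_span_singleton, smul_eq_mul, ← mul_assoc]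
    exact h2
  obtain ⟨q, hq, hle⟩ := exists_le_isAssociatedPrime_of_isNoetherianRing A (c * S₀) ha
  exact ⟨q, hq, le_trans hpa (by rwa [Submodule.bot_colon'] at hle)⟩

end Aux

section Step

universe v

variable {R M : Type v} [CommRing R] [IsNoetherianRing R] [IsLocalRing R]
  [AddCommGroup M] [Module R M] [Module.Finite R M]

/-- Key step: if `p` is an associated prime of `M` and `r ∈ 𝔪` is regular on `M`,
then some associated prime of `M/rM` contains both `p` and `r`. -/
lemma exists_isAssociatedPrime_quotSMulTop
    {r : R} (hr : r ∈ IsLocalRing.maximalIdeal R) (hreg : IsSMulRegular M r)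
    {p : Ideal R} (hp : IsAssociatedPrime p M) :
    ∃ q : Ideal R, IsAssociatedPrime q (QuotSMulTop r M) ∧ p ≤ q ∧ r ∈ q := by
  classical
  obtain ⟨hpp, a, hpa⟩ := isAssociatedPrime_iff.mp hp
  have ha0 : a ≠ 0 := by
    rintro rfl
    exact hpp.ne_top (by
      rw [hpa, Submodule.bot_colon', Submodule.span_singleton_eq_bot.mpr rfl, Submodule.annihilator_bot])
  set I : Ideal R := Ideal.span {r} with hIdef
  have hIne : I ≠ ⊤ := by
    rw [hIdef, Ne, Ideal.span_singleton_eq_top]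
    exact mem_nonunits_iff.mp ((IsLocalRing.mem_maximalIdeal r).mp hr)
  have hKrull : (⨅ i : ℕ, I ^ i • ⊤ : Submodule R M) = ⊥ :=
    Ideal.iInf_pow_smul_eq_bot_of_isLocalRing (M := M) I hIne
  have hex : ∃ m : ℕ, a ∉ (I ^ m • ⊤ : Submodule R M) := by
    by_contra h
    push_neg at h
    exact ha0 (by simpa [hKrull] using Submodule.mem_iInf (fun i : ℕ => (I ^ i • ⊤ : Submodule R M)) |>.mpr h)
  set N := Nat.find hex with hNdef
  have hN : a ∉ (I ^ N • ⊤ : Submodule R M) := Nat.find_spec hex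
  have hN0 : N ≠ 0 := by
    intro h
    apply hN
    rw [h, pow_zero, Ideal.one_eq_top, Submodule.top_smul]
    trivial
  have hN1 : a ∈ (I ^ (N - 1) • ⊤ : Submodule R M) := by
    by_contra h
    exact Nat.find_min hex (by omega) h
  have hsmul : ∀ m : ℕ, (I ^ m • ⊤ : Submodule R M) = r ^ m • (⊤ : Submodule R M) := by
    intro m
    rw [hIdef, Ideal.span_singleton_pow, Submodule.ideal_span_singleton_smul]
  rw [hsmul] at hN1
  rw [show ((r ^ (N-1)) • (⊤ : Submodule R M) : Submodule R M) =
    Submodule.map (DistribMulAction.toLinearMap R M (r ^ (N-1))) ⊤ from rfl,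
    Submodule.mem_map] at hN1
  obtain ⟨b, -, hb⟩ := hN1
  have hb' : r ^ (N - 1) • b = a := by exact hb
  have hbr : b ∉ (r • ⊤ : Submodule R M) := by
    intro hmem
    rw [show ((r • (⊤ : Submodule R M)) : Submodule R M) =
      Submodule.map (DistribMulAction.toLinearMap R M r) ⊤ from rfl, Submodule.mem_map] at hmem
    obtain ⟨c, -, hc⟩ := hmem
    have hc' : r • c = b := by exact hc
    apply hN
    rw [hsmul]
    have : a = r ^ N • c := by
      rw [← hb', ← hc', smul_smul, ← pow_succ]
      congr 2
      omega
    rw [this]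
    exact Submodule.smul_mem_pointwise_smul c (r ^ N) ⊤ trivial
  set bbar : QuotSMulTop r M := Submodule.Quotient.mk b with hbbar
  have hbbar0 : bbar ≠ 0 := by
    rw [hbbar, Ne, Submodule.Quotient.mk_eq_zero]
    exact hbr
  obtain ⟨q, hq, hle⟩ := exists_le_isAssociatedPrime_of_isNoetherianRing R bbar hbbar0
  refine ⟨q, hq, ?_, ?_⟩
  · intro t ht
    have hta : t • a = 0 := by
      rw [hpa, Submodule.bot_colon', Submodule.mem_annihilator_span_singleton] at ht
      exact ht
    have htb : t • b = 0 := by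
      apply hreg.pow (N - 1)
      show r ^ (N - 1) • t • b = r ^ (N - 1) • (0 : M)
      rw [smul_zero, smul_comm, hb', hta]
    apply hle
    rw [Submodule.bot_colon', Submodule.mem_annihilator_span_singleton, hbbar, ← Submodule.Quotient.mk_smul, htb]
    rfl
  · apply hle
    rw [Submodule.bot_colon', Submodule.mem_annihilator_span_singleton, hbbar, ← Submodule.Quotient.mk_smul,
      Submodule.Quotient.mk_eq_zero]
    exact Submodule.smul_mem_pointwise_smul b r ⊤ trivial

end Step

section Chain

universe u

/-- Iterating the key step along a weakly regular sequence. -/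
lemma exists_isAssociatedPrime_quot_ofList {R : Type u} [CommRing R] [IsNoetherianRing R]
    [IsLocalRing R] (l : List R) :
    ∀ (M : Type u) [AddCommGroup M] [Module R M] [Module.Finite R M],
      (∀ x ∈ l, x ∈ IsLocalRing.maximalIdeal R) →
      RingTheory.Sequence.IsWeaklyRegular M l →
      ∀ p : Ideal R, IsAssociatedPrime p M →
      ∃ q : Ideal R, IsAssociatedPrime q (M ⧸ (Ideal.ofList l • ⊤ : Submodule R M))
        ∧ p ≤ q ∧ Ideal.ofList l ≤ q := by
  induction l with
  | nil =>
    intro M _ _ _ _ _ p hp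
    have e : (M ⧸ (Ideal.ofList ([] : List R) • ⊤ : Submodule R M)) ≃ₗ[R] M :=
      Submodule.quotEquivOfEqBot _ (by rw [Ideal.ofList_nil, Submodule.bot_smul])
    exact ⟨p, e.isAssociatedPrime_iff.mpr hp, le_refl p,
      by rw [Ideal.ofList_nil]; exact bot_le⟩
  | cons r l ih =>
    intro M _ _ _ hmem hreg p hp
    rw [RingTheory.Sequence.isWeaklyRegular_cons_iff] at hreg
    obtain ⟨hr, hl⟩ := hreg
    obtain ⟨p', hp', hpp', hrp'⟩ :=
      exists_isAssociatedPrime_quotSMulTop (hmem r (by simp)) hr hp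
    obtain ⟨q, hq, hp'q, hlq⟩ :=
      ih (QuotSMulTop r M) (fun x hx => hmem x (by simp [hx])) hl p' hp'
    refine ⟨q, ?_, le_trans hpp' hp'q, ?_⟩
    · exact ((Submodule.quotOfListConsSMulTopEquivQuotSMulTopInner M r
        l).isAssociatedPrime_iff).mpr hq
    · rw [Ideal.ofList_cons]
      exact sup_le (Ideal.span_le.mpr (Set.singleton_subset_iff.mpr (hp'q hrp'))) hlq

end Chain

/-- If `A` is local noetherian Cohen–Macaulay and `x₁, …, x_k` (here the list
`l ++ [xk]`, of length `k ≥ 2`) is a regular sequence in the maximal ideal, then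
each irreducible component of `Spec A[1/x_k]` meets
`Spec (A/(x₁,…,x_{k−1}))[1/x_k]`: for every minimal prime `p` of `A` not
containing `x_k` there is a prime `q ⊇ p` containing `x₁, …, x_{k−1}` with
`x_k ∉ q`. -/
theorem stmt4 {A : Type*} [CommRing A] [IsNoetherianRing A] [IsLocalRing A]
    (hCM : IsCohenMacaulayLocalRing A)
    (l : List A) (xk : A) (hk : (l ++ [xk]).length ≥ 2)
    (hmem : ∀ x ∈ l ++ [xk], x ∈ IsLocalRing.maximalIdeal A)
    (hreg : RingTheory.Sequence.IsRegular A (l ++ [xk])) :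
    ∀ p ∈ minimalPrimes A, xk ∉ p →
      ∃ q : Ideal A, q.IsPrime ∧ p ≤ q ∧ Ideal.ofList l ≤ q ∧ xk ∉ q := by
  intro p hp hxk
  have hwr := hreg.toIsWeaklyRegular
  rw [RingTheory.Sequence.isWeaklyRegular_append_iff] at hwr
  obtain ⟨hwl, hwxk⟩ := hwr
  rw [RingTheory.Sequence.isWeaklyRegular_singleton_iff] at hwxk
  obtain ⟨q₀, hq₀, hpq₀⟩ := exists_isAssociatedPrime_ge_of_mem_minimalPrimes hp
  obtain ⟨q, hq, hq₀q, hlq⟩ := exists_isAssociatedPrime_quot_ofList l A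
    (fun x hx => hmem x (by simp [hx])) hwl q₀ hq₀
  refine ⟨q, hq.isPrime, le_trans hpq₀ hq₀q, hlq, ?_⟩
  intro hxkq
  obtain ⟨hqp, x, hx⟩ := isAssociatedPrime_iff.mp hq
  have hx0 : x ≠ 0 := by
    rintro rfl
    exact hqp.ne_top (by
      rw [hx, Submodule.bot_colon', Submodule.span_singleton_eq_bot.mpr rfl, Submodule.annihilator_bot])
  have hxx : xk • x = 0 := by
    rw [hx, Submodule.bot_colon', Submodule.mem_annihilator_span_singleton] at hxkq
    exact hxkq
  exact hx0 (hwxk (by show xk • x = xk • 0; rw [hxx, smul_zero]))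
end

section
/- Let O be a complete DVR with uniformizer π. The ring O[[x,y,z]]/((1+y)² − 1) is π-torsion free and has exactly two minimal prime ideals, namely those generated (together with the defining relation) by y and by y + 2. -/
open MvPowerSeries

section Aux

variable {O : Type*} [CommRing O]

private lemma aux_noY_mul {a b : MvPowerSeries (Fin 3) O}
    (ha : ∀ d : Fin 3 →₀ ℕ, d 1 ≠ 0 → coeff d a = 0)
    (hb : ∀ d : Fin 3 →₀ ℕ, d 1 ≠ 0 → coeff d b = 0) :
    ∀ d : Fin 3 →₀ ℕ, d 1 ≠ 0 → coeff d (a * b) = 0 := by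
  intro d hd
  rw [coeff_mul]
  apply Finset.sum_eq_zero
  rintro ⟨i, j⟩ hij
  rw [Finset.HasAntidiagonal.mem_antidiagonal] at hij
  have hij1 : i 1 + j 1 = d 1 := by rw [← hij]; rfl
  rcases (by omega : i 1 ≠ 0 ∨ j 1 ≠ 0) with h | h
  · rw [ha i h, zero_mul]
  · rw [hb j h, mul_zero]

private lemma aux_coeff_lin_mul (c : O) (q : MvPowerSeries (Fin 3) O) (d : Fin 3 →₀ ℕ) :
    coeff d ((X 1 + C c) * q)
      = (if 1 ≤ d 1 then coeff (d - Finsupp.single 1 1) q else 0) + c * coeff d q := by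
  rw [add_mul, map_add, coeff_C_mul, X_def, coeff_monomial_mul]
  simp [Finsupp.single_le_iff]

private lemma aux_vanish {J : Ideal O} [IsHausdorff J O] {c : O} (hc : c ∈ J)
    {q : MvPowerSeries (Fin 3) O}
    (h : ∀ d : Fin 3 →₀ ℕ, d 1 ≠ 0 → coeff d ((X 1 + C c) * q) = 0) :
    q = 0 := by
  have key : ∀ d : Fin 3 →₀ ℕ, coeff d q = -(c * coeff (d + Finsupp.single 1 1) q) := by
    intro d
    have h1 : ((d + Finsupp.single 1 1 : Fin 3 →₀ ℕ)) 1 ≠ 0 := by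
      simp [Finsupp.add_apply]
    have h2 := h _ h1
    rw [aux_coeff_lin_mul, if_pos (by simp [Finsupp.add_apply]),
      add_tsub_cancel_right] at h2
    linear_combination h2
  have mem : ∀ n : ℕ, ∀ d : Fin 3 →₀ ℕ, coeff d q ∈ J ^ n := by
    intro n
    induction n with
    | zero => simp
    | succ n ih =>
      intro d
      rw [key d, pow_succ']
      exact neg_mem (Ideal.mul_mem_mul hc (ih _))
  ext d
  rw [map_zero]
  refine IsHausdorff.haus (inferInstance : IsHausdorff J O) _ fun n => ?_
  rw [SModEq.zero, smul_eq_mul, Ideal.mul_top]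
  exact mem n d

private noncomputable def auxPsum (c : O) (g : MvPowerSeries (Fin 3) O) (k : ℕ)
    (d : Fin 3 →₀ ℕ) : O :=
  ∑ j ∈ Finset.range k, (-c) ^ j * coeff (d + Finsupp.single 1 (j + 1)) g

private lemma aux_pow_mem {J : Ideal O} {c : O} (hc : c ∈ J) (x : O) (j : ℕ) :
    (-c) ^ j * x ∈ J ^ j := by
  rw [neg_pow]
  exact (J ^ j).mul_mem_right _ ((J ^ j).mul_mem_left _ (Ideal.pow_mem_pow hc j))

private lemma aux_exist_decomp {J : Ideal O} [IsAdicComplete J O] {c : O} (hc : c ∈ J)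
    (g : MvPowerSeries (Fin 3) O) :
    ∃ q r : MvPowerSeries (Fin 3) O, g = (X 1 + C c) * q + r ∧
      ∀ d : Fin 3 →₀ ℕ, d 1 ≠ 0 → coeff d r = 0 := by
  classical
  have hcauchy : ∀ d : Fin 3 →₀ ℕ, ∀ {m n : ℕ}, m ≤ n →
      auxPsum c g m d ≡ auxPsum c g n d [SMOD (J ^ m • ⊤ : Submodule O O)] := by
    intro d m n hmn
    rw [SModEq.sub_mem, smul_eq_mul, Ideal.mul_top]
    have hsub : auxPsum c g m d - auxPsum c g n d
        = -∑ j ∈ Finset.Ico m n, (-c) ^ j * coeff (d + Finsupp.single 1 (j + 1)) g := by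
      rw [Finset.sum_Ico_eq_sub _ hmn]
      unfold auxPsum
      ring
    rw [hsub]
    refine neg_mem (Submodule.sum_mem _ fun j hj => ?_)
    exact Ideal.pow_le_pow_right (Finset.mem_Ico.mp hj).1 (aux_pow_mem hc _ j)
  have hq0 : ∀ d : Fin 3 →₀ ℕ, ∃ L : O, ∀ n : ℕ,
      auxPsum c g n d ≡ L [SMOD (J ^ n • ⊤ : Submodule O O)] := fun d =>
    IsPrecomplete.prec (inferInstance : IsPrecomplete J O) (hcauchy d)
  choose q hq using hq0
  set Q : MvPowerSeries (Fin 3) O := fun d => q d with hQdef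
  have hcoe : ∀ e : Fin 3 →₀ ℕ, coeff e Q = q e := fun e => rfl
  refine ⟨Q, g - (X 1 + C c) * Q, by ring, ?_⟩
  intro d hd
  have h1 : 1 ≤ d 1 := Nat.one_le_iff_ne_zero.mpr hd
  rw [map_sub, aux_coeff_lin_mul, if_pos h1]
  have hidx : ∀ j : ℕ, (d - Finsupp.single 1 1) + Finsupp.single 1 (j + 1)
      = d + Finsupp.single 1 j := by
    intro j
    ext s
    rcases eq_or_ne s (1 : Fin 3) with hs | hs
    · subst hs
      simp only [Finsupp.add_apply, Finsupp.tsub_apply, Finsupp.single_eq_same]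
      omega
    · simp only [Finsupp.add_apply, Finsupp.tsub_apply,
        Finsupp.single_eq_of_ne' (Ne.symm hs)]
      omega
  refine IsHausdorff.haus (inferInstance : IsHausdorff J O) _ fun n => ?_
  rw [SModEq.zero, smul_eq_mul, Ideal.mul_top]
  have hA : auxPsum c g n (d - Finsupp.single 1 1) - coeff (d - Finsupp.single 1 1) Q ∈ J ^ n := by
    rw [hcoe]
    have h := hq (d - Finsupp.single 1 1) n
    rwa [SModEq.sub_mem, smul_eq_mul, Ideal.mul_top] at h
  have hB : auxPsum c g n d - coeff d Q ∈ J ^ n := by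
    rw [hcoe]
    have h := hq d n
    rwa [SModEq.sub_mem, smul_eq_mul, Ideal.mul_top] at h
  have htel : coeff d g - auxPsum c g n (d - Finsupp.single 1 1) - c * auxPsum c g n d
      = (-c) ^ n * coeff (d + Finsupp.single 1 n) g := by
    have e1 : auxPsum c g n (d - Finsupp.single 1 1)
        = ∑ j ∈ Finset.range n, (-c) ^ j * coeff (d + Finsupp.single 1 j) g :=
      Finset.sum_congr rfl fun j _ => by rw [hidx j]
    have e2 : c * auxPsum c g n d
        = ∑ j ∈ Finset.range n,
            -((-c) ^ (j + 1) * coeff (d + Finsupp.single 1 (j + 1)) g) := by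
      unfold auxPsum
      rw [Finset.mul_sum]
      exact Finset.sum_congr rfl fun j _ => by ring
    have e4 : (∑ j ∈ Finset.range n, (-c) ^ j * coeff (d + Finsupp.single 1 j) g)
        + (∑ j ∈ Finset.range n,
            -((-c) ^ (j + 1) * coeff (d + Finsupp.single 1 (j + 1)) g))
        = coeff d g - (-c) ^ n * coeff (d + Finsupp.single 1 n) g := by
      rw [← Finset.sum_add_distrib]
      simp_rw [← sub_eq_add_neg]
      rw [Finset.sum_range_sub' (fun j => (-c) ^ j * coeff (d + Finsupp.single 1 j) g) n]
      simp
    rw [e1, e2]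
    linear_combination -e4
  have hx : coeff d g - (coeff (d - Finsupp.single 1 1) Q + c * coeff d Q)
      = ((-c) ^ n * coeff (d + Finsupp.single 1 n) g)
        + (auxPsum c g n (d - Finsupp.single 1 1) - coeff (d - Finsupp.single 1 1) Q)
        + c * (auxPsum c g n d - coeff d Q) := by
    rw [← htel]; ring
  rw [hx]
  exact add_mem (add_mem (aux_pow_mem hc _ n) hA) ((J ^ n).mul_mem_left c hB)

private lemma aux_span_lin_prime [IsDomain O] {J : Ideal O} [IsAdicComplete J O] {c : O}
    (hc : c ∈ J) :
    (Ideal.span {X 1 + C c} : Ideal (MvPowerSeries (Fin 3) O)).IsPrime := by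
  constructor
  · rw [Ideal.ne_top_iff_one]
    intro h1
    rw [Ideal.mem_span_singleton] at h1
    obtain ⟨q, hq⟩ := h1
    have hq0 : q = 0 := by
      refine aux_vanish hc fun d hd => ?_
      rw [← hq, coeff_one, if_neg]
      intro h
      rw [h] at hd
      simp at hd
    rw [hq0, mul_zero] at hq
    exact one_ne_zero hq
  · intro a b hab
    rw [Ideal.mem_span_singleton] at hab
    rw [Ideal.mem_span_singleton, Ideal.mem_span_singleton]
    obtain ⟨t, ht⟩ := hab
    obtain ⟨qa, ra, hra, hNa⟩ := aux_exist_decomp hc a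
    obtain ⟨qb, rb, hrb, hNb⟩ := aux_exist_decomp hc b
    set w : MvPowerSeries (Fin 3) O := X 1 + C c with hw
    have key : ra * rb = w * (t - (w * qa * qb + qa * rb + ra * qb)) := by
      have h1 : a * b = w * t := ht
      have h2 : ra * rb = a * b - w * (w * qa * qb + qa * rb + ra * qb) := by
        rw [hra, hrb]; ring
      rw [h2, h1]; ring
    have h0 : t - (w * qa * qb + qa * rb + ra * qb) = 0 := by
      refine aux_vanish hc fun d hd => ?_
      rw [← key]
      exact aux_noY_mul hNa hNb d hd
    have hrr : ra * rb = 0 := by rw [key, h0, mul_zero]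
    rcases mul_eq_zero.mp hrr with h | h
    · exact Or.inl ⟨qa, by rw [hra, h, add_zero]⟩
    · exact Or.inr ⟨qb, by rw [hrb, h, add_zero]⟩

end Aux

/-- Over a complete DVR `O` (of mixed characteristic, residue characteristic 2)
with uniformizer `π`, the ring `R = O[[x,y,z]]/((1+y)² − 1)` is `π`-torsion free
and has exactly two minimal primes, generated by (the images of) `y` and `y + 2`.
Variables: `0 ↦ x, 1 ↦ y, 2 ↦ z`. -/
theorem stmt16 {O : Type*} [CommRing O] [IsDomain O] [IsDiscreteValuationRing O]
    [CharZero O] [IsAdicComplete (IsLocalRing.maximalIdeal O) O]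
    (h2 : (2 : O) ∈ IsLocalRing.maximalIdeal O)
    (π : O) (hπ : Irreducible π)
    (I : Ideal (MvPowerSeries (Fin 3) O))
    (hI : I = Ideal.span {(1 + X 1) ^ 2 - 1}) :
    (∀ r : MvPowerSeries (Fin 3) O ⧸ I, algebraMap O _ π * r = 0 → r = 0) ∧
    minimalPrimes (MvPowerSeries (Fin 3) O ⧸ I) =
      {Ideal.span {Ideal.Quotient.mk I (X 1)}, Ideal.span {Ideal.Quotient.mk I (X 1 + 2)}} ∧
    (Ideal.span {Ideal.Quotient.mk I (X 1)} : Ideal (MvPowerSeries (Fin 3) O ⧸ I)) ≠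
      Ideal.span {Ideal.Quotient.mk I (X 1 + 2)} := by
  classical
  set S := MvPowerSeries (Fin 3) O
  set f : S := (1 + X 1) ^ 2 - 1 with hf
  have hC2 : (2 : S) = C 2 := (map_ofNat (C (σ := Fin 3) (R := O)) 2).symm
  have hffac : f = X 1 * (X 1 + 2) := by rw [hf]; ring
  have hffac' : f = (X 1 + 2) * X 1 := by rw [hf]; ring
  have h2O : (2 : O) ≠ 0 := two_ne_zero
  -- primality of the two span ideals in S
  have hyprime : (Ideal.span {(X 1 : S)}).IsPrime := by
    have := aux_span_lin_prime (O := O)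
      (J := IsLocalRing.maximalIdeal O) (Ideal.zero_mem _)
    simpa using this
  have hwprime : (Ideal.span {(X 1 + 2 : S)}).IsPrime := by
    have := aux_span_lin_prime (O := O) (J := IsLocalRing.maximalIdeal O) h2
    rwa [← hC2] at this
  -- f ∈ the span ideals
  have hfy : I ≤ Ideal.span {(X 1 : S)} := by
    rw [hI, Ideal.span_le]
    intro x hx
    rw [Set.mem_singleton_iff] at hx
    subst hx
    exact Ideal.mem_span_singleton.mpr ⟨X 1 + 2, hffac⟩
  have hfw : I ≤ Ideal.span {(X 1 + 2 : S)} := by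
    rw [hI, Ideal.span_le]
    intro x hx
    rw [Set.mem_singleton_iff] at hx
    subst hx
    exact Ideal.mem_span_singleton.mpr ⟨X 1, hffac'⟩
  have hmkf : Ideal.Quotient.mk I f = 0 :=
    Ideal.Quotient.eq_zero_iff_mem.mpr (hI ▸ Ideal.subset_span rfl)
  have hmul0 : Ideal.Quotient.mk I (X 1) * Ideal.Quotient.mk I (X 1 + 2) = 0 := by
    rw [← map_mul, ← hffac, hmkf]
  set P1 : Ideal (S ⧸ I) := Ideal.span {Ideal.Quotient.mk I (X 1)} with hP1
  set P2 : Ideal (S ⧸ I) := Ideal.span {Ideal.Quotient.mk I (X 1 + 2)} with hP2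
  have hP1map : P1 = Ideal.map (Ideal.Quotient.mk I) (Ideal.span {(X 1 : S)}) := by
    rw [Ideal.map_span, Set.image_singleton]
  have hP2map : P2 = Ideal.map (Ideal.Quotient.mk I) (Ideal.span {(X 1 + 2 : S)}) := by
    rw [Ideal.map_span, Set.image_singleton]
  have hP1prime : P1.IsPrime := by
    rw [hP1map]
    exact Ideal.map_isPrime_of_surjective Ideal.Quotient.mk_surjective
      (by rwa [Ideal.mk_ker])
  have hP2prime : P2.IsPrime := by
    rw [hP2map]
    exact Ideal.map_isPrime_of_surjective Ideal.Quotient.mk_surjective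
      (by rwa [Ideal.mk_ker])
  -- mk (X 1 + 2) ∉ P1
  have hwP1 : Ideal.Quotient.mk I (X 1 + 2) ∉ P1 := by
    intro hmem
    rw [hP1, Ideal.mem_span_singleton] at hmem
    obtain ⟨u, hu⟩ := hmem
    obtain ⟨t, rfl⟩ := Ideal.Quotient.mk_surjective u
    rw [← map_mul, Ideal.Quotient.eq, hI, Ideal.mem_span_singleton] at hu
    obtain ⟨s, hs⟩ := hu
    have hcc := congrArg (constantCoeff) hs
    simp only [map_sub, map_mul, map_add, constantCoeff_X, map_ofNat, hf] at hcc
    norm_num at hcc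
  -- mk (X 1) ∉ P2
  have hyP2 : Ideal.Quotient.mk I (X 1) ∉ P2 := by
    intro hmem
    rw [hP2, Ideal.mem_span_singleton] at hmem
    obtain ⟨u, hu⟩ := hmem
    obtain ⟨t, rfl⟩ := Ideal.Quotient.mk_surjective u
    rw [← map_mul, Ideal.Quotient.eq, hI, Ideal.mem_span_singleton] at hu
    obtain ⟨s, hs⟩ := hu
    -- X 1 = (X 1 + 2) * (t + X 1 * s)
    have hkey : (X 1 : S) = (X 1 + 2) * (t + X 1 * s) := by
      linear_combination hs
    set u : S := t + X 1 * s with hudef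
    have hc0 : constantCoeff u = 0 := by
      have hcc := congrArg (constantCoeff) hkey
      simp only [map_mul, map_add, constantCoeff_X, map_ofNat, zero_add] at hcc
      rcases mul_eq_zero.mp hcc.symm with h | h
      · exact absurd h (by norm_num)
      · exact h
    have hc1 := congrArg (coeff (Finsupp.single (1 : Fin 3) 1)) hkey
    rw [coeff_index_single_self_X, hC2, aux_coeff_lin_mul, if_pos (by simp),
      tsub_self] at hc1
    rw [coeff_zero_eq_constantCoeff_apply, hc0, zero_add] at hc1
    exact (IsLocalRing.mem_maximalIdeal (2 : O)).mp h2
      (IsUnit.of_mul_eq_one (a := (2 : O)) _ hc1.symm)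
  -- the three parts
  refine ⟨?_, ?_, ?_⟩
  · -- π-torsion free
    intro r hr
    obtain ⟨g, rfl⟩ := Ideal.Quotient.mk_surjective r
    have halg : algebraMap O (S ⧸ I) π = Ideal.Quotient.mk I (C π) := by
      rw [IsScalarTower.algebraMap_apply O S (S ⧸ I), Ideal.Quotient.algebraMap_eq,
        ← c_eq_algebraMap]
    rw [halg, ← map_mul, Ideal.Quotient.eq_zero_iff_mem, hI,
      Ideal.mem_span_singleton] at hr
    obtain ⟨t, ht⟩ := hr
    have hπprime : Prime π := UniqueFactorizationMonoid.irreducible_iff_prime.mp hπ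
    have hspanπ : (Ideal.span {π}).IsPrime :=
      (Ideal.span_singleton_prime hπprime.ne_zero).mpr hπprime
    haveI := hspanπ
    set k := O ⧸ Ideal.span {π}
    set Mπ : MvPowerSeries (Fin 3) O →+* MvPowerSeries (Fin 3) k :=
      map (Ideal.Quotient.mk (Ideal.span {π}))
    have hMf : Mπ f ≠ 0 := by
      intro h0
      have hc := congrArg (coeff (Finsupp.single (1 : Fin 3) 2)) h0
      have hexp : Mπ f = X 1 ^ 2 + C 2 * X 1 := by
        simp only [hf, map_sub, map_add, map_one, map_pow, map_X, Mπ]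
        rw [map_ofNat (C (σ := Fin 3) (R := k)) 2]
        ring
      rw [hexp] at hc
      rw [map_add, coeff_X_pow, if_pos rfl, coeff_C_mul, coeff_X, if_neg, mul_zero,
        add_zero, map_zero] at hc
      · exact one_ne_zero hc
      · intro hsing
        have := congrArg (fun v => v (1 : Fin 3)) hsing
        simp at this
    have hMt : Mπ t = 0 := by
      have hπ0 : Ideal.Quotient.mk (Ideal.span {π}) π = 0 :=
        Ideal.Quotient.eq_zero_iff_mem.mpr (Ideal.subset_span rfl)
      have h0 := congrArg Mπ ht
      rw [map_mul, map_mul, map_C, hπ0, map_zero, zero_mul] at h0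
      rcases mul_eq_zero.mp h0.symm with h | h
      · exact absurd h hMf
      · exact h
    have hdvd : ∀ d : Fin 3 →₀ ℕ, π ∣ coeff d t := by
      intro d
      have := congrArg (coeff d) hMt
      rw [coeff_map, map_zero] at this
      exact Ideal.mem_span_singleton.mp (Ideal.Quotient.eq_zero_iff_mem.mp this)
    choose t' ht' using hdvd
    set T : S := fun d => t' d with hT
    have hTeq : t = C π * T := by
      ext d
      rw [coeff_C_mul]
      exact ht' d
    have hcπ : (C π : S) ≠ 0 := by
      intro h0
      have := congrArg (constantCoeff) h0
      rw [constantCoeff_C, map_zero] at this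
      exact hπprime.ne_zero this
    have hgf : g = f * T := by
      have h1 : C π * g = C π * (f * T) := by
        rw [ht, hTeq]; ring
      have := mul_left_cancel₀ hcπ h1
      exact this
    rw [hgf, Ideal.Quotient.eq_zero_iff_mem]
    exact I.mul_mem_right T (hI ▸ Ideal.subset_span rfl)
  · -- minimal primes
    ext P
    simp only [Set.mem_insert_iff, Set.mem_singleton_iff]
    constructor
    · rintro ⟨⟨hPp, -⟩, hmin⟩
      have hmem : Ideal.Quotient.mk I (X 1) ∈ P ∨ Ideal.Quotient.mk I (X 1 + 2) ∈ P :=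
        hPp.mem_or_mem (hmul0 ▸ P.zero_mem)
      rcases hmem with h | h
      · left
        have hle : P1 ≤ P := (Ideal.span_le).mpr (Set.singleton_subset_iff.mpr h)
        exact le_antisymm (hmin ⟨hP1prime, bot_le⟩ hle) hle
      · right
        have hle : P2 ≤ P := (Ideal.span_le).mpr (Set.singleton_subset_iff.mpr h)
        exact le_antisymm (hmin ⟨hP2prime, bot_le⟩ hle) hle
    · rintro (rfl | rfl)
      · refine ⟨⟨hP1prime, bot_le⟩, ?_⟩
        rintro Q ⟨hQp, -⟩ hQle
        rcases hQp.mem_or_mem (hmul0 ▸ Q.zero_mem) with h | h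
        · exact (Ideal.span_le).mpr (Set.singleton_subset_iff.mpr h)
        · exact absurd (hQle h) hwP1
      · refine ⟨⟨hP2prime, bot_le⟩, ?_⟩
        rintro Q ⟨hQp, -⟩ hQle
        rcases hQp.mem_or_mem (hmul0 ▸ Q.zero_mem) with h | h
        · exact absurd (hQle h) hyP2
        · exact (Ideal.span_le).mpr (Set.singleton_subset_iff.mpr h)
  · -- the two ideals are distinct
    intro heq
    exact hwP1 (heq ▸ Ideal.subset_span rfl)
end

section
/- Let A be a commutative ring, Ỹ ∈ GL₂(A) with tr(Ỹ)² = 4·det(Ỹ), and suppose Ỹ⁵ = det(Ỹ)²·Z̃ỸZ̃⁻¹ for some Z̃ ∈ GL₂(A). Then 5Ỹ − 2·tr(Ỹ) = Z̃ỸZ̃⁻¹ (as 2×2 matrices, with tr(Ỹ) acting as a scalar). -/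
lemma ch_fin_two {A : Type*} [CommRing A] (M : Matrix (Fin 2) (Fin 2) A) :
    M ^ 2 = Matrix.trace M • M - Matrix.det M • (1 : Matrix (Fin 2) (Fin 2) A) := by
  ext i j
  fin_cases i <;> fin_cases j <;>
    simp [pow_two, Matrix.mul_apply, Fin.sum_univ_two, Matrix.trace_fin_two,
      Matrix.det_fin_two, Matrix.one_apply] <;> ring

/-- If `Ỹ, Z̃ ∈ GL₂(A)` with `tr(Ỹ)² = 4·det(Ỹ)` and `Ỹ⁵ = det(Ỹ)²·Z̃ỸZ̃⁻¹`,
then `5Ỹ − 2·tr(Ỹ)·1 = Z̃ỸZ̃⁻¹`. -/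
theorem stmt19 {A : Type*} [CommRing A]
    (Y Z : (Matrix (Fin 2) (Fin 2) A)ˣ)
    (ht : Matrix.trace (Y : Matrix (Fin 2) (Fin 2) A) ^ 2 =
      4 * Matrix.det (Y : Matrix (Fin 2) (Fin 2) A))
    (hrel : (Y : Matrix (Fin 2) (Fin 2) A) ^ 5 =
      (Matrix.det (Y : Matrix (Fin 2) (Fin 2) A)) ^ 2 •
        ((Z * Y * Z⁻¹ : (Matrix (Fin 2) (Fin 2) A)ˣ) : Matrix (Fin 2) (Fin 2) A)) :
    5 • (Y : Matrix (Fin 2) (Fin 2) A) -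
        (2 * Matrix.trace (Y : Matrix (Fin 2) (Fin 2) A)) • (1 : Matrix (Fin 2) (Fin 2) A) =
      ((Z * Y * Z⁻¹ : (Matrix (Fin 2) (Fin 2) A)ˣ) : Matrix (Fin 2) (Fin 2) A) := by
  set M : Matrix (Fin 2) (Fin 2) A := (Y : Matrix (Fin 2) (Fin 2) A) with hM
  set t := Matrix.trace M
  set d := Matrix.det M
  have h2 : M ^ 2 = t • M - d • 1 := ch_fin_two M
  have hrec : ∀ n : ℕ, M ^ (n + 2) = t • M ^ (n + 1) - d • M ^ n := by
    intro n
    have : M ^ (n + 2) = M ^ 2 * M ^ n := by rw [← pow_add, add_comm]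
    rw [this, h2, Matrix.sub_mul, Matrix.smul_mul, Matrix.smul_mul, one_mul,
      ← pow_succ']
  have h3 : M ^ 3 = (t * t - d) • M - (t * d) • 1 := by
    rw [hrec 1, h2, pow_one]; module
  have h4 : M ^ 4 = (t * (t * t - d) - d * t) • M - (t * (t * d) - d * d) • 1 := by
    rw [hrec 2, h3, h2]; module
  have h5 : M ^ 5 = d ^ 2 • ((5 : A) • M - (2 * t) • (1 : Matrix (Fin 2) (Fin 2) A)) := by
    rw [hrec 3, h4, h3]
    match_scalars
    · linear_combination (t ^ 2 + d) * ht
    · linear_combination (-(t * d)) * ht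
  rw [h5, hM] at hrel
  have hdu : IsUnit d := (Matrix.isUnit_iff_isUnit_det M).mp Y.isUnit
  obtain ⟨u, hu⟩ := hdu
  have key := congrArg (fun N => ((u⁻¹ : Aˣ) : A) ^ 2 • N) hrel
  simp only [smul_smul, ← mul_pow, ← hu, Units.inv_mul, one_pow, one_smul] at key
  rw [← key]
  module
end
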